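/- Let G be a finite simple undirected graph, C a set of vertices (adversaries) each of which has either zero or at least two neighbours outside C, and let H be the bipartite graph on C × N_G(C) with edges those of G between C and N_G(C). If G is acyclic then for every binary matrix A whose rows each equal the indicator vector (over N_G(C)) of N_G(c) for some c ∈ C repeated with arbitrary column time-splitting (each row has at most one 1 per neighbour-block, and row τ has a 1 in block ν iff the corresponding adversary is adjacent to neighbour ν), there is no row vector y such that yA has exactly one nonzero entry. -/

import Mathlib

open Finset in
private lemma stmt9_no_revisit {V : Type*} [DecidableEq V] {G : SimpleGraph V} (hacyc : G.IsAcyclic)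
    {u a x b : V} (r : G.Walk u a) (h₀ : G.Adj a x)
    (hp : (r.concat h₀).IsPath) (h : G.Adj x b) (hab : b ≠ a) :
    b ∉ (r.concat h₀).support := by
  intro hb
  have hxr : x ∉ r.support := by
    have hnd := hp.support_nodup
    rw [SimpleGraph.Walk.support_concat, List.nodup_append'] at hnd
    intro hx
    exact hnd.2.2 hx (List.mem_singleton.mpr rfl)
  have hcyc : (SimpleGraph.Walk.cons h ((r.concat h₀).dropUntil b hb)).IsCycle := by
    rw [SimpleGraph.Walk.cons_isCycle_iff]
    refine ⟨hp.dropUntil _, ?_⟩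
    intro he
    have he' := SimpleGraph.Walk.edges_dropUntil_subset _ hb he
    rw [SimpleGraph.Walk.edges_concat, List.concat_eq_append, List.mem_append,
      List.mem_singleton] at he'
    rcases he' with he' | he'
    · exact hxr (SimpleGraph.Walk.fst_mem_support_of_mem_edges r he')
    · rw [Sym2.eq_iff] at he'
      rcases he' with ⟨hxa, hbx⟩ | ⟨-, hba⟩
      · exact h.ne' hbx
      · exact hab hba
  exact hacyc _ hcyc

private lemma stmt9_concat_path {V : Type*} {G : SimpleGraph V}
    {u a x : V} (r : G.Walk u a) (h₀ : G.Adj a x) (hr : r.IsPath) (hx : x ∉ r.support) :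
    (r.concat h₀).IsPath := by
  rw [SimpleGraph.Walk.isPath_def, SimpleGraph.Walk.support_concat,
    List.nodup_append']
  rw [SimpleGraph.Walk.isPath_def] at hr
  refine ⟨hr, List.nodup_singleton x, ?_⟩
  intro a ha hax
  rw [List.mem_singleton] at hax
  subst hax
  exact hx ha

theorem stmt_9 {V : Type*} [Fintype V] [DecidableEq V] (G : SimpleGraph V)
    (C : Set V)
    (hdeg : ∀ c ∈ C, ({v : V | v ∉ C ∧ G.Adj c v}.ncard = 0 ∨
                      2 ≤ {v : V | v ∉ C ∧ G.Adj c v}.ncard))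
    (hacyc : G.IsAcyclic)
    (t : ℕ)
    (A : Matrix (Fin t) ({v : V // v ∉ C ∧ ∃ c ∈ C, G.Adj c v} × Fin t) ℝ)
    (hbin : ∀ τ c, A τ c = 0 ∨ A τ c = 1)
    (hrows : ∀ τ : Fin t, ∃ c ∈ C,
      ∀ ν : {v : V // v ∉ C ∧ ∃ c ∈ C, G.Adj c v},
        (G.Adj c ν.1 → ∑ i : Fin t, A τ (ν, i) = 1) ∧
        (¬ G.Adj c ν.1 → ∀ i : Fin t, A τ (ν, i) = 0)) :
    ¬ ∃ (y : Fin t → ℝ) (p : {v : V // v ∉ C ∧ ∃ c ∈ C, G.Adj c v} × Fin t),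
        Matrix.vecMul y A p ≠ 0 ∧ ∀ q, q ≠ p → Matrix.vecMul y A q = 0 := by
  classical
  rintro ⟨y, ⟨ν₀, i₀⟩, hp0, hpq⟩
  choose c hcC hcprop using hrows
  -- the weight of each adversary
  set w : V → ℝ := fun v => ∑ τ ∈ Finset.univ.filter (fun τ => c τ = v), y τ with hw
  have hwC : ∀ v, w v ≠ 0 → v ∈ C := by
    intro v hv
    by_contra hvC
    apply hv
    rw [hw]
    apply Finset.sum_eq_zero
    intro τ hτ
    rw [Finset.mem_filter] at hτ
    exact absurd (hτ.2 ▸ hcC τ) hvC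
  -- block sums
  have hS : ∀ ν : {v : V // v ∉ C ∧ ∃ c ∈ C, G.Adj c v},
      (∑ v : V, if G.Adj v ν.1 then w v else 0) = ∑ i : Fin t, Matrix.vecMul y A (ν, i) := by
    intro ν
    calc ∑ v : V, (if G.Adj v ν.1 then w v else 0)
        = ∑ v : V, ∑ τ ∈ Finset.univ.filter (fun τ => c τ = v),
            (if G.Adj (c τ) ν.1 then y τ else 0) := by
          refine Finset.sum_congr rfl fun v _ => ?_
          by_cases hv : G.Adj v ν.1
          · rw [if_pos hv, hw]
            refine Finset.sum_congr rfl fun τ hτ => ?_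
            rw [Finset.mem_filter] at hτ
            rw [if_pos (by rw [hτ.2]; exact hv)]
          · rw [if_neg hv]
            refine (Finset.sum_eq_zero fun τ hτ => ?_).symm
            rw [Finset.mem_filter] at hτ
            rw [if_neg (by rw [hτ.2]; exact hv)]
      _ = ∑ τ, (if G.Adj (c τ) ν.1 then y τ else 0) :=
          Finset.sum_fiberwise_of_maps_to (fun τ _ => Finset.mem_univ _) _
      _ = ∑ τ, y τ * ∑ i : Fin t, A τ (ν, i) := by
          refine Finset.sum_congr rfl fun τ _ => ?_
          by_cases hv : G.Adj (c τ) ν.1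
          · rw [if_pos hv, (hcprop τ ν).1 hv, mul_one]
          · rw [if_neg hv,
              show (∑ i : Fin t, A τ (ν, i)) = 0 from
                Finset.sum_eq_zero fun i _ => (hcprop τ ν).2 hv i, mul_zero]
      _ = ∑ i : Fin t, ∑ τ, y τ * A τ (ν, i) := by
          simp_rw [Finset.mul_sum]; exact Finset.sum_comm
      _ = ∑ i : Fin t, Matrix.vecMul y A (ν, i) := by
          refine Finset.sum_congr rfl fun i _ => ?_
          simp [Matrix.vecMul, dotProduct]
  -- the special block is nonzero
  have hSν₀ : (∑ v : V, if G.Adj v ν₀.1 then w v else 0) ≠ 0 := by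
    rw [hS ν₀]
    rw [Finset.sum_eq_single i₀]
    · exact hp0
    · intro i _ hi
      exact hpq (ν₀, i) (by simp [Prod.ext_iff, hi])
    · intro h
      exact absurd (Finset.mem_univ i₀) h
  -- other blocks vanish
  have hS0 : ∀ ν : {v : V // v ∉ C ∧ ∃ c ∈ C, G.Adj c v}, ν ≠ ν₀ →
      (∑ v : V, if G.Adj v ν.1 then w v else 0) = 0 := by
    intro ν hν
    rw [hS ν]
    refine Finset.sum_eq_zero fun i _ => ?_
    exact hpq (ν, i) (by simp [Prod.ext_iff]; intro h; exact absurd h hν)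
  -- there is a nonzero-weight adversary adjacent to ν₀
  have hexist₀ : ∃ c0 : V, w c0 ≠ 0 ∧ G.Adj c0 ν₀.1 := by
    by_contra hcon
    push_neg at hcon
    apply hSν₀
    refine Finset.sum_eq_zero fun v _ => ?_
    by_cases hv : G.Adj v ν₀.1
    · rw [if_pos hv]
      by_contra hwv
      exact hcon v hwv hv
    · rw [if_neg hv]
  -- any non-special neighbour adjacent to a nonzero adversary has a second one
  have hstep : ∀ (ν' : V), ν' ∉ C → ∀ c0 : V, w c0 ≠ 0 → G.Adj c0 ν' → ν' ≠ ν₀.1 →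
      ∃ c', c' ≠ c0 ∧ w c' ≠ 0 ∧ G.Adj c' ν' := by
    intro ν' hν'C c0 hc0w hc0adj hν'ν₀
    have hc0C : c0 ∈ C := hwC c0 hc0w
    set νs : {v : V // v ∉ C ∧ ∃ c ∈ C, G.Adj c v} := ⟨ν', hν'C, c0, hc0C, hc0adj⟩ with hνs
    have hz : (∑ v : V, if G.Adj v ν' then w v else 0) = 0 :=
      hS0 νs (fun h => hν'ν₀ (congrArg Subtype.val h))
    by_contra hcon
    push_neg at hcon
    have : (∑ v : V, if G.Adj v ν' then w v else 0) = w c0 := by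
      rw [Finset.sum_eq_single c0]
      · rw [if_pos hc0adj]
      · intro b _ hb
        by_cases hbadj : G.Adj b ν'
        · rw [if_pos hbadj]
          by_contra hwb
          exact hcon b hb hwb hbadj
        · rw [if_neg hbadj]
      · intro h; exact absurd (Finset.mem_univ c0) h
    exact hc0w (this ▸ hz)
  -- each relevant adversary has a second outside neighbour
  have hdeg2 : ∀ c0 ∈ C, ∀ ν : V, ν ∉ C → G.Adj c0 ν →
      ∃ ν', ν' ≠ ν ∧ ν' ∉ C ∧ G.Adj c0 ν' := by
    intro c0 hc0 ν hν hadj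
    have hmem : ν ∈ {v : V | v ∉ C ∧ G.Adj c0 v} := ⟨hν, hadj⟩
    have hfin : {v : V | v ∉ C ∧ G.Adj c0 v}.Finite := Set.toFinite _
    have hpos : 0 < {v : V | v ∉ C ∧ G.Adj c0 v}.ncard :=
      (Set.ncard_pos hfin).2 ⟨ν, hmem⟩
    have h2 : 2 ≤ {v : V | v ∉ C ∧ G.Adj c0 v}.ncard := by
      rcases hdeg c0 hc0 with h | h
      · omega
      · exact h
    obtain ⟨b, hbs, hbν⟩ := Set.exists_ne_of_one_lt_ncard (s := {v : V | v ∉ C ∧ G.Adj c0 v}) (by omega) ν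
    exact ⟨b, hbν, hbs.1, hbs.2⟩
  -- build arbitrarily long paths
  have main : ∀ n : ℕ, ∃ (ν cc : V) (_ : ν ∉ C) (q : G.Walk ν₀.1 ν),
      q.IsPath ∧ q.length = 2 * n ∧ w cc ≠ 0 ∧ G.Adj cc ν ∧ cc ∉ q.support := by
    intro n
    induction n with
    | zero =>
      obtain ⟨c0, hc0w, hc0adj⟩ := hexist₀
      refine ⟨ν₀.1, c0, ν₀.2.1, SimpleGraph.Walk.nil, SimpleGraph.Walk.IsPath.nil, by simp,
        hc0w, hc0adj, ?_⟩
      simp only [SimpleGraph.Walk.support_nil, List.mem_singleton]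
      intro h
      exact ν₀.2.1 (h ▸ hwC c0 hc0w)
    | succ n ih =>
      obtain ⟨ν, cc, hνC, q, hqP, hqlen, hccw, hccadj, hccsup⟩ := ih
      have hccC := hwC cc hccw
      obtain ⟨ν', hν'ν, hν'C, hadj'⟩ := hdeg2 cc hccC ν hνC hccadj
      have hq1P : (q.concat hccadj.symm).IsPath := stmt9_concat_path (r := q) (h₀ := hccadj.symm) hqP hccsup
      have hν'q1 : ν' ∉ (q.concat hccadj.symm).support :=
        stmt9_no_revisit hacyc q hccadj.symm hq1P hadj' hν'ν
      have hq2P : ((q.concat hccadj.symm).concat hadj').IsPath :=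
        stmt9_concat_path (r := q.concat hccadj.symm) (h₀ := hadj') hq1P hν'q1
      have hν'ν₀ : ν' ≠ ν₀.1 := by
        intro h
        apply hν'q1
        rw [h]
        exact SimpleGraph.Walk.start_mem_support _
      obtain ⟨c', hc'cc, hc'w, hc'adj⟩ := hstep ν' hν'C cc hccw hadj' hν'ν₀
      have hc'q2 : c' ∉ ((q.concat hccadj.symm).concat hadj').support :=
        stmt9_no_revisit hacyc (q.concat hccadj.symm) hadj' hq2P hc'adj.symm hc'cc
      exact ⟨ν', c', hν'C, (q.concat hccadj.symm).concat hadj', hq2P,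
        by rw [SimpleGraph.Walk.length_concat, SimpleGraph.Walk.length_concat, hqlen]; ring,
        hc'w, hc'adj, hc'q2⟩
  obtain ⟨ν, cc, _, q, hqP, hqlen, -⟩ := main (Fintype.card V)
  have hlt := hqP.length_lt
  omega
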